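/- On the cone over S = SO(l)/(SO(l-4)×Sp(1)) realized as N(ℍ)/Sp(1) with N(ℍ) = {u ∈ ℍ^l : the four real component vectors u⁰,u¹,u²,u³ ∈ ℝ^l are mutually orthogonal of norm 1/2}, let T' be generated by the block-diagonal rotation with integer weights b₁,…,b_s and T_q(u) = uq for 0 ≠ q ∈ Im ℍ. Then |T'|²|T_q|² - ⟨T', T_q⟩² ≥ |q|² Σ_{β<γ} (|b_β| - |b_γ|)² (|u_{2β-1}|² + |u_{2β}|²)(|u_{2γ-1}|² + |u_{2γ}|²); in particular, if the |b_β| are pairwise distinct, T' is nowhere tangent to the Sp(1)-orbits on N(ℍ), so the induced S¹-action on SO(l)/(SO(l-4)×Sp(1)) is locally free. -/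

import Mathlib

noncomputable section

/-- The real Euclidean inner product on `ℍ ≅ ℝ⁴`: `⟨x,y⟩ = Re(x ȳ)`. -/
def qdot (x y : Quaternion ℝ) : ℝ := (x * star y).re

/-- The four real components of a quaternion (the vectors `u⁰,u¹,u²,u³`). -/
def qcomp : Fin 4 → Quaternion ℝ → ℝ
  | 0 => fun x => x.re
  | 1 => fun x => x.imI
  | 2 => fun x => x.imJ
  | 3 => fun x => x.imK

/-- Coordinates of `ℍ^l` with `l = 2s + t`: the `s` pairs `(u_{2β-1}, u_{2β})` are
indexed by `Fin s × Fin 2` and the `t ≤ 1` remaining coordinates by `Fin t`. -/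
abbrev qIdx (s t : ℕ) := (Fin s × Fin 2) ⊕ Fin t

/-- The generator `T'` of the weighted block-diagonal rotation with integer weights
`b₁,…,b_s`: on the pair `(u_{2β-1}, u_{2β})` it acts as `(b_β u_{2β}, -b_β u_{2β-1})`,
and it vanishes on the remaining coordinate. -/
def Tw {s t : ℕ} (b : Fin s → ℤ) (u : qIdx s t → Quaternion ℝ) :
    qIdx s t → Quaternion ℝ := fun α =>
  match α with
  | Sum.inl (β, c) =>
      if c = 0 then ((b β : ℝ)) • u (Sum.inl (β, 1))
      else (-(b β : ℝ)) • u (Sum.inl (β, 0))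
  | Sum.inr _ => 0

/-- The generator of the right `Sp(1)`-multiplication: `T_q(u) = u q`. -/
def Tq {s t : ℕ} (u : qIdx s t → Quaternion ℝ) (q : Quaternion ℝ) :
    qIdx s t → Quaternion ℝ := fun α => u α * q

/-- on `N(ℍ) ⊂ ℍ^l` (`l = 2s + t`, `t ≤ 1`), with `T'` the weighted
rotation field and `T_q(u) = uq` (`q ∈ Im ℍ`), one has
`|T'|²|T_q|² - ⟨T',T_q⟩² ≥ |q|² Σ_{β<γ} (|b_β|-|b_γ|)² (|u_{2β-1}|²+|u_{2β}|²)(|u_{2γ-1}|²+|u_{2γ}|²)`;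
in particular, if the `|b_β|` are pairwise distinct and `u ∈ N(ℍ)` (the four component
vectors `u⁰,u¹,u²,u³ ∈ ℝ^l` are orthogonal of square norm `1/4`), then `T'` is nowhere
tangent to the `Sp(1)`-orbits: `⟨T',T_q⟩² < |T'|²|T_q|²` for all `0 ≠ q ∈ Im ℍ`,
so the induced `S¹`-action on `SO(l)/(SO(l-4)×Sp(1))` is locally free. -/
/- ## auxiliary lemmas -/

lemma qdot_comps (x y : Quaternion ℝ) :
    qdot x y = x.re * y.re + x.imI * y.imI + x.imJ * y.imJ + x.imK * y.imK := by
  simp [qdot, Quaternion.re_mul]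

lemma qdot_self (x : Quaternion ℝ) : qdot x x = Quaternion.normSq x := by
  rw [qdot_comps, Quaternion.normSq_def']; ring

lemma qdot_smul_smul (r r' : ℝ) (x y : Quaternion ℝ) :
    qdot (r • x) (r' • y) = r * r' * qdot x y := by
  simp [qdot_comps]; ring

lemma qdot_smul_left (r : ℝ) (x y : Quaternion ℝ) : qdot (r • x) y = r * qdot x y := by
  simp [qdot_comps]; ring

lemma qdot_anti (x y q : Quaternion ℝ) (hq : q.re = 0) :
    qdot y (x * q) = - qdot x (y * q) := by
  simp [qdot_comps, Quaternion.re_mul, Quaternion.imI_mul, Quaternion.imJ_mul,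
    Quaternion.imK_mul, hq]; ring

lemma qdot_mulq_self (x q : Quaternion ℝ) :
    qdot (x * q) (x * q) = Quaternion.normSq x * Quaternion.normSq q := by
  simp [qdot_comps, Quaternion.re_mul, Quaternion.imI_mul, Quaternion.imJ_mul,
    Quaternion.imK_mul, Quaternion.normSq_def']; ring

lemma qdot_cs (x y : Quaternion ℝ) :
    (qdot x y) ^ 2 ≤ Quaternion.normSq x * Quaternion.normSq y := by
  rw [qdot_comps, Quaternion.normSq_def', Quaternion.normSq_def']
  nlinarith [sq_nonneg (x.re*y.imI - x.imI*y.re), sq_nonneg (x.re*y.imJ - x.imJ*y.re),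
    sq_nonneg (x.re*y.imK - x.imK*y.re), sq_nonneg (x.imI*y.imJ - x.imJ*y.imI),
    sq_nonneg (x.imI*y.imK - x.imK*y.imI), sq_nonneg (x.imJ*y.imK - x.imK*y.imJ)]

lemma qdot_zero : qdot 0 0 = 0 := by simp [qdot, Quaternion.re_zero]

lemma sum_qIdx {s t : ℕ} (f : qIdx s t → ℝ) :
    ∑ α, f α = (∑ β : Fin s, (f (Sum.inl (β, 0)) + f (Sum.inl (β, 1))))
      + ∑ j : Fin t, f (Sum.inr j) := by
  rw [Fintype.sum_sum_type, Fintype.sum_prod_type]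
  simp [Fin.sum_univ_two]

lemma Tw_inl0 {s t : ℕ} (b : Fin s → ℤ) (u : qIdx s t → Quaternion ℝ) (β : Fin s) :
    Tw b u (Sum.inl (β, 0)) = ((b β : ℝ)) • u (Sum.inl (β, 1)) := by simp [Tw]

lemma Tw_inl1 {s t : ℕ} (b : Fin s → ℤ) (u : qIdx s t → Quaternion ℝ) (β : Fin s) :
    Tw b u (Sum.inl (β, 1)) = (-(b β : ℝ)) • u (Sum.inl (β, 0)) := by simp [Tw]

lemma Tw_inr {s t : ℕ} (b : Fin s → ℤ) (u : qIdx s t → Quaternion ℝ) (j : Fin t) :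
    Tw b u (Sum.inr j) = 0 := rfl

/-- Lagrange-type identity. -/
lemma lagrange {s : ℕ} (a m : Fin s → ℝ) :
    (∑ β, (a β)^2 * m β) * (∑ β, m β) - (∑ β, a β * m β)^2
      = ∑ p ∈ Finset.univ.filter (fun p : Fin s × Fin s => p.1 < p.2),
          (a p.1 - a p.2)^2 * m p.1 * m p.2 := by
  classical
  set F : Fin s × Fin s → ℝ := fun p => (a p.1 - a p.2)^2 * m p.1 * m p.2 with hF
  have h1 : ∑ p, F p = ∑ p ∈ Finset.univ.filter (fun p : Fin s × Fin s => p.1 < p.2), F p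
      + ∑ p ∈ Finset.univ.filter (fun p : Fin s × Fin s => ¬ p.1 < p.2), F p :=
    (Finset.sum_filter_add_sum_filter_not _ _ _).symm
  have h2 : ∑ p ∈ Finset.univ.filter (fun p : Fin s × Fin s => ¬ p.1 < p.2), F p
      = ∑ p ∈ Finset.univ.filter (fun p : Fin s × Fin s => p.1 ≤ p.2), F p := by
    refine Finset.sum_nbij' (fun p => Prod.swap p) (fun p => Prod.swap p) ?_ ?_ ?_ ?_ ?_
    · intro p hp
      simp only [Finset.mem_filter, Finset.mem_univ, true_and, not_lt] at hp ⊢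
      exact hp
    · intro p hp
      simp only [Finset.mem_filter, Finset.mem_univ, true_and, not_lt] at hp ⊢
      exact hp
    · intro p _; simp
    · intro p _; simp
    · intro p _; simp only [hF, Prod.fst_swap, Prod.snd_swap]; ring
  have h3 : ∑ p ∈ Finset.univ.filter (fun p : Fin s × Fin s => p.1 ≤ p.2), F p
      = ∑ p ∈ Finset.univ.filter (fun p : Fin s × Fin s => p.1 < p.2), F p := by
    rw [← Finset.sum_filter_add_sum_filter_not
      (Finset.univ.filter (fun p : Fin s × Fin s => p.1 ≤ p.2))
      (fun p : Fin s × Fin s => p.1 < p.2) F]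
    have e1 : (Finset.univ.filter (fun p : Fin s × Fin s => p.1 ≤ p.2)).filter
        (fun p : Fin s × Fin s => p.1 < p.2)
        = Finset.univ.filter (fun p : Fin s × Fin s => p.1 < p.2) := by
      rw [Finset.filter_filter]
      apply Finset.filter_congr
      intro p _
      simp only [and_iff_right_iff_imp]
      exact le_of_lt
    have e2 : ∑ p ∈ (Finset.univ.filter (fun p : Fin s × Fin s => p.1 ≤ p.2)).filter
        (fun p : Fin s × Fin s => ¬ p.1 < p.2), F p = 0 := by
      apply Finset.sum_eq_zero
      intro p hp
      simp only [Finset.filter_filter, Finset.mem_filter, Finset.mem_univ, true_and] at hp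
      have : p.1 = p.2 := le_antisymm hp.1 (not_lt.mp hp.2)
      simp [hF, this]
    rw [e1, e2, add_zero]
  have h4 : ∑ p, F p = 2 * ∑ p ∈ Finset.univ.filter (fun p : Fin s × Fin s => p.1 < p.2), F p := by
    rw [h1, h2, h3]; ring
  have h5 : ∑ p, F p = 2 * ((∑ β, (a β)^2 * m β) * (∑ β, m β) - (∑ β, a β * m β)^2) := by
    rw [Fintype.sum_prod_type]
    have key : ∀ β : Fin s, ∑ γ : Fin s, F (β, γ)
        = ((a β)^2 * m β) * (∑ γ, m γ) + m β * (∑ γ, (a γ)^2 * m γ)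
          - (a β * m β) * (2 * ∑ γ, a γ * m γ) := by
      intro β
      simp only [Finset.mul_sum]
      rw [← Finset.sum_add_distrib, ← Finset.sum_sub_distrib]
      apply Finset.sum_congr rfl
      intro γ _
      simp only [hF]; ring
    rw [Finset.sum_congr rfl (fun β _ => key β)]
    simp only [Finset.sum_sub_distrib, Finset.sum_add_distrib, ← Finset.sum_mul]
    ring
  have := h4.symm.trans h5
  linarith

/-- the contradiction from small support -/
lemma small_support_contra {ι : Type} [Fintype ι] [DecidableEq ι] (u : ι → Quaternion ℝ)
    (S : Finset ι) (hcard : S.card ≤ 3) (hsupp : ∀ α ∉ S, u α = 0)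
    (h4 : ∀ p p' : Fin 4,
      (∑ α, qcomp p (u α) * qcomp p' (u α)) = if p = p' then (1/4 : ℝ) else 0) :
    False := by
  classical
  have hz : ∀ p : Fin 4, qcomp p (0 : Quaternion ℝ) = 0 := by
    intro p; fin_cases p <;> simp [qcomp, Quaternion.re_zero, Quaternion.imI_zero, Quaternion.imJ_zero, Quaternion.imK_zero]
  set v : Fin 4 → EuclideanSpace ℝ S := fun p => WithLp.toLp 2 (fun α : S => 2 * qcomp p (u α.1)) with hv
  have horth : Orthonormal ℝ v := by
    rw [orthonormal_iff_ite]
    intro p p'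
    have : (inner ℝ (v p) (v p') : ℝ) = ∑ α : S, (2 * qcomp p (u α.1)) * (2 * qcomp p' (u α.1)) := by
      rw [PiLp.inner_apply]
      simp [hv, RCLike.inner_apply, mul_comm]
    rw [this]
    have e1 : ∑ α : S, (2 * qcomp p (u α.1)) * (2 * qcomp p' (u α.1))
        = ∑ α ∈ S, (2 * qcomp p (u α)) * (2 * qcomp p' (u α)) :=
      Finset.sum_coe_sort S (fun α => (2 * qcomp p (u α)) * (2 * qcomp p' (u α)))
    have e2 : ∑ α ∈ S, (2 * qcomp p (u α)) * (2 * qcomp p' (u α))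
        = ∑ α : ι, (2 * qcomp p (u α)) * (2 * qcomp p' (u α)) := by
      apply Finset.sum_subset (Finset.subset_univ S)
      intro x _ hx
      rw [hsupp x hx, hz, hz]; ring
    have e3 : ∑ α : ι, (2 * qcomp p (u α)) * (2 * qcomp p' (u α))
        = 4 * ∑ α : ι, qcomp p (u α) * qcomp p' (u α) := by
      rw [Finset.mul_sum]; apply Finset.sum_congr rfl; intro α _; ring
    rw [e1, e2, e3, h4 p p']
    split <;> norm_num
  have hli := horth.linearIndependent
  have hcard4 := hli.fintype_card_le_finrank
  rw [finrank_euclideanSpace] at hcard4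
  simp only [Fintype.card_fin, Fintype.card_coe] at hcard4
  omega

theorem stmt19 (s t : ℕ) (ht : t ≤ 1) (b : Fin s → ℤ)
    (u : qIdx s t → Quaternion ℝ) :
    (∀ q : Quaternion ℝ, q.re = 0 →
      (∑ α, qdot (Tw b u α) (Tw b u α)) * (∑ α, qdot (Tq u q α) (Tq u q α))
          - (∑ α, qdot (Tw b u α) (Tq u q α)) ^ 2
        ≥ qdot q q *
            ∑ p ∈ Finset.univ.filter (fun p : Fin s × Fin s => p.1 < p.2),
              (|(b p.1 : ℝ)| - |(b p.2 : ℝ)|) ^ 2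
                * (Quaternion.normSq (u (Sum.inl (p.1, 0)))
                    + Quaternion.normSq (u (Sum.inl (p.1, 1))))
                * (Quaternion.normSq (u (Sum.inl (p.2, 0)))
                    + Quaternion.normSq (u (Sum.inl (p.2, 1))))) ∧
    ((∀ β γ : Fin s, β ≠ γ → (b β).natAbs ≠ (b γ).natAbs) →
      (∀ p p' : Fin 4,
        (∑ α, qcomp p (u α) * qcomp p' (u α)) = if p = p' then (1/4 : ℝ) else 0) →
      ∀ q : Quaternion ℝ, q.re = 0 → q ≠ 0 →
        (∑ α, qdot (Tw b u α) (Tq u q α)) ^ 2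
          < (∑ α, qdot (Tw b u α) (Tw b u α)) * (∑ α, qdot (Tq u q α) (Tq u q α))) := by
  classical
  set m : Fin s → ℝ := fun β =>
    Quaternion.normSq (u (Sum.inl (β, 0))) + Quaternion.normSq (u (Sum.inl (β, 1))) with hm
  set a : Fin s → ℝ := fun β => |(b β : ℝ)| with ha
  have hm_nonneg : ∀ β, 0 ≤ m β := fun β =>
    add_nonneg (Quaternion.normSq_nonneg) (Quaternion.normSq_nonneg)
  -- |T'|²
  have hA : (∑ α, qdot (Tw b u α) (Tw b u α)) = ∑ β, (a β)^2 * m β := by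
    rw [sum_qIdx]
    have : ∀ j : Fin t, qdot (Tw b u (Sum.inr j)) (Tw b u (Sum.inr j)) = 0 := by
      intro j; rw [Tw_inr]; exact qdot_zero
    rw [Finset.sum_congr rfl (fun j _ => this j), Finset.sum_const, smul_zero, add_zero]
    apply Finset.sum_congr rfl
    intro β _
    rw [Tw_inl0, Tw_inl1, qdot_smul_smul, qdot_smul_smul, qdot_self, qdot_self]
    simp only [ha, hm, sq_abs]
    ring
  -- the key estimate, for any imaginary q
  have main : ∀ q : Quaternion ℝ, q.re = 0 →
      (∑ α, qdot (Tw b u α) (Tw b u α)) * (∑ α, qdot (Tq u q α) (Tq u q α))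
          - (∑ α, qdot (Tw b u α) (Tq u q α)) ^ 2
        ≥ qdot q q *
            ∑ p ∈ Finset.univ.filter (fun p : Fin s × Fin s => p.1 < p.2),
              (a p.1 - a p.2) ^ 2 * m p.1 * m p.2 := by
    intro q hq
    set Q : ℝ := Quaternion.normSq q with hQdef
    have hQ0 : 0 ≤ Q := Quaternion.normSq_nonneg
    -- |T_q|²
    have hB : (∑ α, qdot (Tq u q α) (Tq u q α)) = Q * ∑ α, Quaternion.normSq (u α) := by
      rw [Finset.mul_sum]
      apply Finset.sum_congr rfl
      intro α _
      rw [Tq, qdot_mulq_self]; ring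
    have hsplitn : ∑ α, Quaternion.normSq (u α)
        = (∑ β, m β) + ∑ j : Fin t, Quaternion.normSq (u (Sum.inr j)) := by
      rw [sum_qIdx (fun α => Quaternion.normSq (u α))]
    -- ⟨T',T_q⟩
    have hC : (∑ α, qdot (Tw b u α) (Tq u q α))
        = ∑ β, (b β : ℝ) * (2 * qdot (u (Sum.inl (β, 1))) (u (Sum.inl (β, 0)) * q)) := by
      rw [sum_qIdx]
      have : ∀ j : Fin t, qdot (Tw b u (Sum.inr j)) (Tq u q (Sum.inr j)) = 0 := by
        intro j; rw [Tw_inr]; simp [qdot_comps, Quaternion.re_zero, Quaternion.imI_zero, Quaternion.imJ_zero, Quaternion.imK_zero]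
      rw [Finset.sum_congr rfl (fun j _ => this j), Finset.sum_const, smul_zero, add_zero]
      apply Finset.sum_congr rfl
      intro β _
      rw [Tq, Tq, Tw_inl0, Tw_inl1, qdot_smul_left, qdot_smul_left,
        qdot_anti (u (Sum.inl (β, 1))) (u (Sum.inl (β, 0))) q hq]
      ring
    -- per-pair bound
    have hcb : ∀ β, |(b β : ℝ) * (2 * qdot (u (Sum.inl (β, 1))) (u (Sum.inl (β, 0)) * q))|
        ≤ Real.sqrt Q * (a β * m β) := by
      intro β
      have hcs := qdot_cs (u (Sum.inl (β, 1))) (u (Sum.inl (β, 0)) * q)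
      rw [show Quaternion.normSq (u (Sum.inl (β, 0)) * q)
          = Quaternion.normSq (u (Sum.inl (β, 0))) * Q from map_mul Quaternion.normSq _ _] at hcs
      have hn0 : (0:ℝ) ≤ Quaternion.normSq (u (Sum.inl (β, 0))) := Quaternion.normSq_nonneg
      have hn1 : (0:ℝ) ≤ Quaternion.normSq (u (Sum.inl (β, 1))) := Quaternion.normSq_nonneg
      have hsq : ((b β : ℝ) * (2 * qdot (u (Sum.inl (β, 1))) (u (Sum.inl (β, 0)) * q))) ^ 2
          ≤ Q * (a β * m β) ^ 2 := by
        have h1 : (2 * qdot (u (Sum.inl (β, 1))) (u (Sum.inl (β, 0)) * q)) ^ 2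
            ≤ Q * (m β) ^ 2 := by
          simp only [hm]
          nlinarith [sq_nonneg (Quaternion.normSq (u (Sum.inl (β, 0)))
            - Quaternion.normSq (u (Sum.inl (β, 1))))]
        have h2 : ((b β : ℝ))^2 = (a β)^2 := (sq_abs _).symm
        calc ((b β : ℝ) * (2 * qdot (u (Sum.inl (β, 1))) (u (Sum.inl (β, 0)) * q))) ^ 2
            = ((b β : ℝ))^2 * (2 * qdot (u (Sum.inl (β, 1))) (u (Sum.inl (β, 0)) * q)) ^ 2 := by
              ring
          _ ≤ ((b β : ℝ))^2 * (Q * (m β)^2) := by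
              apply mul_le_mul_of_nonneg_left h1 (sq_nonneg _)
          _ = Q * (a β * m β)^2 := by rw [h2]; ring
      have habs : |(b β : ℝ) * (2 * qdot (u (Sum.inl (β, 1))) (u (Sum.inl (β, 0)) * q))|
          = Real.sqrt (((b β : ℝ) * (2 * qdot (u (Sum.inl (β, 1)))
              (u (Sum.inl (β, 0)) * q))) ^ 2) := (Real.sqrt_sq_eq_abs _).symm
      rw [habs]
      calc Real.sqrt (((b β : ℝ) * (2 * qdot (u (Sum.inl (β, 1)))
              (u (Sum.inl (β, 0)) * q))) ^ 2)
          ≤ Real.sqrt (Q * (a β * m β) ^ 2) := Real.sqrt_le_sqrt hsq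
        _ = Real.sqrt Q * (a β * m β) := by
            rw [Real.sqrt_mul hQ0, Real.sqrt_sq (mul_nonneg (abs_nonneg _) (hm_nonneg β))]
    have hCabs : |∑ α, qdot (Tw b u α) (Tq u q α)| ≤ Real.sqrt Q * ∑ β, a β * m β := by
      rw [hC]
      calc |∑ β, (b β : ℝ) * (2 * qdot (u (Sum.inl (β, 1))) (u (Sum.inl (β, 0)) * q))|
          ≤ ∑ β, |(b β : ℝ) * (2 * qdot (u (Sum.inl (β, 1))) (u (Sum.inl (β, 0)) * q))| :=
            Finset.abs_sum_le_sum_abs _ _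
        _ ≤ ∑ β, Real.sqrt Q * (a β * m β) := Finset.sum_le_sum (fun β _ => hcb β)
        _ = Real.sqrt Q * ∑ β, a β * m β := by rw [Finset.mul_sum]
    have hS_nonneg : 0 ≤ ∑ β, a β * m β :=
      Finset.sum_nonneg fun β _ => mul_nonneg (abs_nonneg _) (hm_nonneg β)
    have hC2 : (∑ α, qdot (Tw b u α) (Tq u q α)) ^ 2 ≤ Q * (∑ β, a β * m β) ^ 2 := by
      have h1 : (∑ α, qdot (Tw b u α) (Tq u q α)) ^ 2
          = |∑ α, qdot (Tw b u α) (Tq u q α)| ^ 2 := (sq_abs _).symm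
      rw [h1]
      calc |∑ α, qdot (Tw b u α) (Tq u q α)| ^ 2
          ≤ (Real.sqrt Q * ∑ β, a β * m β) ^ 2 := by
            apply pow_le_pow_left₀ (abs_nonneg _) hCabs
        _ = Q * (∑ β, a β * m β) ^ 2 := by
            rw [mul_pow, Real.sq_sqrt hQ0]
    have hA_nonneg : 0 ≤ ∑ β, (a β)^2 * m β :=
      Finset.sum_nonneg fun β _ => mul_nonneg (sq_nonneg _) (hm_nonneg β)
    have hE_nonneg : 0 ≤ ∑ j : Fin t, Quaternion.normSq (u (Sum.inr j)) :=
      Finset.sum_nonneg fun j _ => Quaternion.normSq_nonneg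
    have hAB : (∑ α, qdot (Tw b u α) (Tw b u α)) * (∑ α, qdot (Tq u q α) (Tq u q α))
        ≥ Q * ((∑ β, (a β)^2 * m β) * (∑ β, m β)) := by
      rw [hA, hB, hsplitn]
      have : (∑ β, (a β)^2 * m β) * (Q * ((∑ β, m β)
          + ∑ j : Fin t, Quaternion.normSq (u (Sum.inr j))))
          = Q * ((∑ β, (a β)^2 * m β) * (∑ β, m β))
            + Q * ((∑ β, (a β)^2 * m β) * ∑ j : Fin t, Quaternion.normSq (u (Sum.inr j))) := by
        ring
      rw [this]
      have : 0 ≤ Q * ((∑ β, (a β)^2 * m β) * ∑ j : Fin t, Quaternion.normSq (u (Sum.inr j))) :=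
        mul_nonneg hQ0 (mul_nonneg hA_nonneg hE_nonneg)
      linarith
    have hqq : qdot q q = Q := qdot_self q
    rw [hqq]
    have hlag := lagrange a m
    have hQlag : Q * ((∑ β, (a β)^2 * m β) * (∑ β, m β)) - Q * (∑ β, a β * m β)^2
        = Q * ∑ p ∈ Finset.univ.filter (fun p : Fin s × Fin s => p.1 < p.2),
            (a p.1 - a p.2) ^ 2 * m p.1 * m p.2 := by
      rw [← hlag]; ring
    nlinarith [hAB, hC2, hQlag, mul_le_mul_of_nonneg_left hC2 hQ0]
  constructor
  · intro q hq
    exact main q hq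
  · intro hb h4 q hq hq0
    have hineq := main q hq
    have hQpos : 0 < Quaternion.normSq q :=
      lt_of_le_of_ne Quaternion.normSq_nonneg (Ne.symm (Quaternion.normSq_ne_zero.mpr hq0))
    have hqq : qdot q q = Quaternion.normSq q := qdot_self q
    -- two distinct indices with nonzero m
    have key : ∃ β γ : Fin s, β ≠ γ ∧ m β ≠ 0 ∧ m γ ≠ 0 := by
      by_contra hcon
      push_neg at hcon
      have hzero : ∀ β c, m β = 0 → u (Sum.inl (β, c)) = 0 := by
        intro β c hβ
        have hβ' : Quaternion.normSq (u (Sum.inl (β, 0)))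
            + Quaternion.normSq (u (Sum.inl (β, 1))) = 0 := hβ
        have h0 : Quaternion.normSq (u (Sum.inl (β, 0))) = 0 ∧
            Quaternion.normSq (u (Sum.inl (β, 1))) = 0 := by
          constructor <;>
            linarith [Quaternion.normSq_nonneg (a := u (Sum.inl (β, (1:Fin 2)))),
              Quaternion.normSq_nonneg (a := u (Sum.inl (β, (0:Fin 2))))]
        fin_cases c
        · exact Quaternion.normSq_eq_zero.mp h0.1
        · exact Quaternion.normSq_eq_zero.mp h0.2
      by_cases hex : ∃ β₀ : Fin s, m β₀ ≠ 0
      · obtain ⟨β₀, hβ₀⟩ := hex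
        refine small_support_contra u
          (insert (Sum.inl (β₀, 0)) (insert (Sum.inl (β₀, 1))
            (Finset.univ.image Sum.inr))) ?_ ?_ h4
        · calc (insert (Sum.inl (β₀, (0:Fin 2))) (insert (Sum.inl (β₀, 1))
              (Finset.univ.image (Sum.inr : Fin t → qIdx s t)))).card
              ≤ (insert (Sum.inl (β₀, (1:Fin 2))) (Finset.univ.image
                  (Sum.inr : Fin t → qIdx s t))).card + 1 := Finset.card_insert_le _ _
            _ ≤ ((Finset.univ.image (Sum.inr : Fin t → qIdx s t)).card + 1) + 1 := by
                have := Finset.card_insert_le (Sum.inl (β₀, (1:Fin 2)))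
                  (Finset.univ.image (Sum.inr : Fin t → qIdx s t))
                omega
            _ ≤ 3 := by
                have h := Finset.card_image_le (f := (Sum.inr : Fin t → qIdx s t))
                  (s := Finset.univ)
                simp only [Finset.card_univ, Fintype.card_fin] at h
                omega
        · intro α hα
          rcases α with ⟨β, c⟩ | j
          · by_cases hββ : β = β₀
            · subst hββ
              exfalso
              fin_cases c <;> simp at hα
            · exact hzero β c (hcon β₀ β (Ne.symm hββ) hβ₀)
          · exfalso
            apply hα
            simp
      · push_neg at hex
        refine small_support_contra u (Finset.univ.image Sum.inr) ?_ ?_ h4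
        · have h := Finset.card_image_le (f := (Sum.inr : Fin t → qIdx s t)) (s := Finset.univ)
          simp only [Finset.card_univ, Fintype.card_fin] at h
          omega
        · intro α hα
          rcases α with ⟨β, c⟩ | j
          · exact hzero β c (hex β)
          · exfalso; apply hα; simp
    obtain ⟨β, γ, hne, hmβ, hmγ⟩ := key
    have hterm : ∀ β' γ' : Fin s, β' ≠ γ' → m β' ≠ 0 → m γ' ≠ 0 →
        0 < (a β' - a γ') ^ 2 * m β' * m γ' := by
      intro β' γ' hne' h1 h2
      have hab : a β' ≠ a γ' := by
        intro hEq
        apply hb β' γ' hne'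
        have : ((b β').natAbs : ℝ) = ((b γ').natAbs : ℝ) := by
          rw [Nat.cast_natAbs, Int.cast_abs, Nat.cast_natAbs, Int.cast_abs]
          exact hEq
        exact_mod_cast this
      have hsq : 0 < (a β' - a γ') ^ 2 :=
        lt_of_le_of_ne (sq_nonneg _) (Ne.symm (pow_ne_zero 2 (sub_ne_zero.mpr hab)))
      exact mul_pos (mul_pos hsq (lt_of_le_of_ne (hm_nonneg β') (Ne.symm h1)))
        (lt_of_le_of_ne (hm_nonneg γ') (Ne.symm h2))
    have hsumpos : 0 < ∑ p ∈ Finset.univ.filter (fun p : Fin s × Fin s => p.1 < p.2),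
        (a p.1 - a p.2) ^ 2 * m p.1 * m p.2 := by
      apply Finset.sum_pos'
      · intro p _
        exact mul_nonneg (mul_nonneg (sq_nonneg _) (hm_nonneg _)) (hm_nonneg _)
      · rcases hne.lt_or_gt with h | h
        · exact ⟨(β, γ), Finset.mem_filter.mpr ⟨Finset.mem_univ _, h⟩,
            hterm β γ hne hmβ hmγ⟩
        · exact ⟨(γ, β), Finset.mem_filter.mpr ⟨Finset.mem_univ _, h⟩,
            hterm γ β (Ne.symm hne) hmγ hmβ⟩
    have hpos : 0 < qdot q q * ∑ p ∈ Finset.univ.filter (fun p : Fin s × Fin s => p.1 < p.2),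
        (a p.1 - a p.2) ^ 2 * m p.1 * m p.2 := by
      rw [hqq]; exact mul_pos hQpos hsumpos
    linarith
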